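/- Let G be an unswitchable simple graph on a finite vertex set V. Then G is the unique realization of its degree sequence on V: if H is any simple graph on V with d_H(v) = d_G(v) for all v ∈ V, then H = G. -/

import Mathlib

open scoped Classical

/-- A graph is unswitchable if no 2-switch is possible in it: there are no four distinct
vertices `u, v, w, x` with `{u,v}, {w,x}` edges and `{u,w}, {v,x}` non-edges. -/
def Unswitchable {V : Type*} (G : SimpleGraph V) : Prop :=
  ¬ ∃ u v w x : V, u ≠ v ∧ u ≠ w ∧ u ≠ x ∧ v ≠ w ∧ v ≠ x ∧ w ≠ x ∧
      G.Adj u v ∧ G.Adj w x ∧ ¬ G.Adj u w ∧ ¬ G.Adj v x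

section UnswAux

open Finset

variable {V : Type*}

lemma unsw_nested (G : SimpleGraph V) (hG : Unswitchable G) {u v : V} (huv : u ≠ v) :
    (∀ z, z ≠ v → G.Adj u z → G.Adj v z) ∨ (∀ z, z ≠ u → G.Adj v z → G.Adj u z) := by
  by_contra h
  push_neg at h
  obtain ⟨⟨x, hxv, hux, hvx⟩, ⟨y, hyu, hvy, huy⟩⟩ := h
  refine hG ⟨x, u, v, y, hux.ne', hxv, ?_, huv, Ne.symm hyu, hvy.ne,
    hux.symm, hvy, fun h' => hvx h'.symm, huy⟩
  rintro rfl
  exact hvx hvy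

lemma unsw_nested_rev [Fintype V] (G : SimpleGraph V) {v y : V}
    (h1 : ∀ z, z ≠ y → G.Adj v z → G.Adj y z) (h2 : G.degree y ≤ G.degree v) :
    ∀ z, z ≠ v → G.Adj y z → G.Adj v z := by
  have hAB : (G.neighborFinset v).erase y ⊆ (G.neighborFinset y).erase v := by
    intro z hz
    rw [mem_erase, SimpleGraph.mem_neighborFinset] at *
    exact ⟨hz.2.ne', h1 z hz.1 hz.2⟩
  have hy : y ∈ G.neighborFinset v ↔ v ∈ G.neighborFinset y := by
    simp [SimpleGraph.adj_comm]
  have hcard : ((G.neighborFinset y).erase v).card ≤ ((G.neighborFinset v).erase y).card := by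
    by_cases hmem : y ∈ G.neighborFinset v
    · rw [card_erase_of_mem hmem, card_erase_of_mem (hy.mp hmem)]
      exact Nat.sub_le_sub_right h2 1
    · rw [erase_eq_of_notMem hmem, erase_eq_of_notMem (fun h => hmem (hy.mpr h))]
      exact h2
  have heq := Finset.eq_of_subset_of_card_le hAB hcard
  intro z hzv hyz
  have hz : z ∈ (G.neighborFinset y).erase v := by
    rw [mem_erase, SimpleGraph.mem_neighborFinset]; exact ⟨hzv, hyz⟩
  rw [← heq, mem_erase, SimpleGraph.mem_neighborFinset] at hz
  exact hz.2

lemma unsw_exists_iso_or_dom [Fintype V] [Nonempty V] (G : SimpleGraph V)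
    (hG : Unswitchable G) :
    ∃ v, (∀ u, ¬ G.Adj v u) ∨ (∀ u, u ≠ v → G.Adj v u) := by
  obtain ⟨v, -, hv⟩ := Finset.exists_max_image (Finset.univ : Finset V) (fun u => G.degree u)
    ⟨Classical.arbitrary V, Finset.mem_univ _⟩
  by_cases hdom : ∀ u, u ≠ v → G.Adj v u
  · exact ⟨v, Or.inr hdom⟩
  push_neg at hdom
  obtain ⟨x, hxv, hvx⟩ := hdom
  refine ⟨x, Or.inl fun y hxy => ?_⟩
  have hvy : v ≠ y := by rintro rfl; exact hvx hxy.symm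
  rcases unsw_nested G hG hvy with h1 | h2
  · exact hvx (unsw_nested_rev G h1 (hv y (mem_univ y)) x hxv hxy.symm)
  · exact hvx (h2 x hxv hxy.symm)

lemma unsw_iso_iff [Fintype V] (G : SimpleGraph V) (v : V) :
    (∀ u, ¬ G.Adj v u) ↔ G.degree v = 0 := by
  have : G.degree v = (G.neighborFinset v).card := rfl
  rw [this, card_eq_zero, eq_empty_iff_forall_notMem]
  simp [SimpleGraph.mem_neighborFinset]

lemma unsw_dom_iff [Fintype V] (G : SimpleGraph V) (v : V) :
    (∀ u, u ≠ v → G.Adj v u) ↔ G.degree v = Fintype.card V - 1 := by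
  have hdeg : G.degree v = (G.neighborFinset v).card := rfl
  constructor
  · intro h
    have he : G.neighborFinset v = univ.erase v := by
      ext u
      rw [mem_erase, SimpleGraph.mem_neighborFinset]
      exact ⟨fun h' => ⟨h'.ne', mem_univ u⟩, fun h' => h u h'.1⟩
    rw [hdeg, he, card_erase_of_mem (mem_univ v), card_univ]
  · intro h u huv
    have hsub : G.neighborFinset v ⊆ univ.erase v := fun w hw =>
      mem_erase.mpr ⟨((G.mem_neighborFinset v w).mp hw).ne', mem_univ w⟩
    have hcard : (univ.erase v).card ≤ (G.neighborFinset v).card := by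
      rw [card_erase_of_mem (mem_univ v), card_univ, ← hdeg, h]
    have heq := Finset.eq_of_subset_of_card_le hsub hcard
    have hmem : u ∈ G.neighborFinset v := by
      rw [heq, mem_erase]; exact ⟨huv, mem_univ u⟩
    exact (G.mem_neighborFinset v u).mp hmem

lemma unsw_induce (G : SimpleGraph V) (hG : Unswitchable G) (s : Set V) :
    Unswitchable (G.induce s) := by
  rintro ⟨u, v, w, x, h1, h2, h3, h4, h5, h6, ha, hb, hc, hd⟩
  exact hG ⟨↑u, ↑v, ↑w, ↑x, Subtype.coe_injective.ne h1, Subtype.coe_injective.ne h2,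
    Subtype.coe_injective.ne h3, Subtype.coe_injective.ne h4, Subtype.coe_injective.ne h5,
    Subtype.coe_injective.ne h6, by simpa using ha, by simpa using hb,
    by simpa using hc, by simpa using hd⟩

lemma unsw_degree_induce [Fintype V] (G : SimpleGraph V) (v : V) (u : ↥({x : V | x ≠ v})) :
    (G.induce {x : V | x ≠ v}).degree u = Fintype.card {w : V // w ≠ v ∧ G.Adj ↑u w} := by
  rw [← SimpleGraph.card_neighborSet_eq_degree]
  apply Fintype.card_congr
  refine Equiv.trans ?_ (Equiv.subtypeSubtypeEquivSubtypeInter (fun x : V => x ≠ v)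
    (fun w => G.Adj ↑u w))
  apply Equiv.subtypeEquivRight
  intro w
  simp [SimpleGraph.mem_neighborSet]

lemma unsw_card_iso [Fintype V] (G : SimpleGraph V) (v : V) (hv : ∀ u, ¬ G.Adj v u) (u : V) :
    Fintype.card {w : V // w ≠ v ∧ G.Adj u w} = G.degree u := by
  rw [← SimpleGraph.card_neighborSet_eq_degree]
  apply Fintype.card_congr
  apply Equiv.subtypeEquivRight
  intro w
  simp only [SimpleGraph.mem_neighborSet]
  refine ⟨fun h => h.2, fun h => ⟨?_, h⟩⟩
  rintro rfl
  exact hv u h.symm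

lemma unsw_card_dom [Fintype V] (G : SimpleGraph V) (v : V) (hv : ∀ u, u ≠ v → G.Adj v u)
    (u : V) (hu : u ≠ v) :
    Fintype.card {w : V // w ≠ v ∧ G.Adj u w} = G.degree u - 1 := by
  rw [Fintype.card_subtype]
  have he : univ.filter (fun w => w ≠ v ∧ G.Adj u w) = (G.neighborFinset u).erase v := by
    ext w
    rw [mem_filter, mem_erase, SimpleGraph.mem_neighborFinset]
    exact ⟨fun h => ⟨h.2.1, h.2.2⟩, fun h => ⟨mem_univ w, h.1, h.2⟩⟩
  have hmem : v ∈ G.neighborFinset u := by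
    rw [SimpleGraph.mem_neighborFinset]
    exact (hv u hu).symm
  rw [he, card_erase_of_mem hmem]
  rfl

lemma unsw_aux : ∀ (n : ℕ) (V : Type u) [Fintype V], Fintype.card V = n →
    ∀ (G : SimpleGraph V), Unswitchable G → ∀ (H : SimpleGraph V),
      (∀ v : V, H.degree v = G.degree v) → H = G := by
  intro n
  induction n using Nat.strong_induction_on with
  | _ n ih =>
    intro V _ hn G hG H hdeg
    rcases Nat.eq_zero_or_pos n with rfl | hpos
    · have hE : IsEmpty V := Fintype.card_eq_zero_iff.mp hn
      ext u w
      exact hE.elim u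
    have hNE : Nonempty V := Fintype.card_pos_iff.mp (hn ▸ hpos)
    obtain ⟨v, hv⟩ := unsw_exists_iso_or_dom G hG
    set s : Set V := {x : V | x ≠ v} with hs
    have hcards : Fintype.card ↥s = n - 1 := by
      have : Fintype.card ↥s = Fintype.card V - 1 := by
        simp [hs, Fintype.card_subtype_compl, Finset.filter_ne', Finset.card_erase_of_mem]
      rw [this, hn]
    have hG' : Unswitchable (G.induce s) := unsw_induce G hG s
    rcases hv with hiso | hdom
    · have hisoH : ∀ u, ¬ H.Adj v u :=
        (unsw_iso_iff H v).mpr (by rw [hdeg]; exact (unsw_iso_iff G v).mp hiso)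
      have hdeg' : ∀ u : ↥s, (H.induce s).degree u = (G.induce s).degree u := by
        intro u
        rw [unsw_degree_induce, unsw_degree_induce, unsw_card_iso G v hiso,
          unsw_card_iso H v hisoH, hdeg]
      have hind := ih (n - 1) (by omega) ↥s hcards (G.induce s) hG' (H.induce s) hdeg'
      ext u w
      by_cases huv : u = v
      · rw [huv]
        exact iff_of_false (hisoH w) (hiso w)
      by_cases hwv : w = v
      · rw [hwv]
        exact iff_of_false (fun h => hisoH u h.symm) (fun h => hiso u h.symm)
      have h2 := congrArg (fun K : SimpleGraph ↥s => K.Adj ⟨u, huv⟩ ⟨w, hwv⟩) hind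
      simpa using h2
    · have hdomH : ∀ u, u ≠ v → H.Adj v u :=
        (unsw_dom_iff H v).mpr (by rw [hdeg]; exact (unsw_dom_iff G v).mp hdom)
      have hdeg' : ∀ u : ↥s, (H.induce s).degree u = (G.induce s).degree u := by
        intro u
        rw [unsw_degree_induce, unsw_degree_induce, unsw_card_dom G v hdom ↑u u.2,
          unsw_card_dom H v hdomH ↑u u.2, hdeg]
      have hind := ih (n - 1) (by omega) ↥s hcards (G.induce s) hG' (H.induce s) hdeg'
      ext u w
      by_cases huv : u = v
      · rw [huv]
        by_cases hwv : w = v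
        · rw [hwv]
          exact iff_of_false (H.irrefl) (G.irrefl)
        · exact iff_of_true (hdomH w hwv) (hdom w hwv)
      by_cases hwv : w = v
      · rw [hwv]
        exact iff_of_true (hdomH u huv).symm (hdom u huv).symm
      have h2 := congrArg (fun K : SimpleGraph ↥s => K.Adj ⟨u, huv⟩ ⟨w, hwv⟩) hind
      simpa using h2

end UnswAux

/-- An unswitchable finite simple graph is the unique realization of its degree sequence
on its vertex set: any graph on the same vertex set with the same degree at every vertex
is equal to it. -/
theorem unswitchable_unique_realization {V : Type*} [Fintype V]
    (G : SimpleGraph V) (hG : Unswitchable G)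
    (H : SimpleGraph V) (hdeg : ∀ v : V, H.degree v = G.degree v) : H = G :=
  unsw_aux (Fintype.card V) V rfl G hG H hdeg
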